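/- If (a_n) is a non-negative super-additive sequence with a_0 = 0 and lim a_n/n = H < ∞, and (k(n)) is a non-decreasing sequence of naturals with k(n) → ∞ satisfying b_{k(n)} + k(n)·c ≤ a_n ≤ b_{k(n)+1} + (k(n)+1)·c for a non-negative super-additive sequence (b_k) with lim b_k/k = H' ∈ (0,∞) and a constant c > 0, then lim_{n→∞} k(n)/n = H/(H' + c). -/

import Mathlib

open Filter

set_option maxHeartbeats 1000000 in
/-- **Asymptotics of the normalized edge weights.** If `(a n)` is non-negative super-additive
with `a 0 = 0` and `lim a n / n = H < ∞`, and `(k n)` is a non-decreasing sequence of naturals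
tending to infinity, sandwiched by `b (k n) + (k n)·c ≤ a n ≤ b (k n + 1) + (k n + 1)·c` for a
non-negative super-additive sequence `(b)` with `lim b k / k = H' ∈ (0, ∞)` and a constant
`c > 0`, then `lim_{n→∞} k n / n = H / (H' + c)`. -/
theorem normalized_weight_limit (a b : ℕ → ℝ) (k : ℕ → ℕ) (c H H' : ℝ)
    (ha0 : a 0 = 0) (hann : ∀ n, 0 ≤ a n)
    (hasuper : ∀ m n : ℕ, a m + a n ≤ a (m + n))
    (hb0 : b 0 = 0) (hbnn : ∀ n, 0 ≤ b n)
    (hbsuper : ∀ m n : ℕ, b m + b n ≤ b (m + n))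
    (hH : Tendsto (fun n : ℕ => a n / n) atTop (nhds H))
    (hH' : Tendsto (fun m : ℕ => b m / m) atTop (nhds H'))
    (hH'pos : 0 < H')
    (hc : 0 < c)
    (hkmono : Monotone k)
    (hkinf : Tendsto k atTop atTop)
    (hlower : ∀ n, b (k n) + (k n : ℝ) * c ≤ a n)
    (hupper : ∀ n, a n ≤ b (k n + 1) + ((k n : ℝ) + 1) * c) :
    Tendsto (fun n : ℕ => (k n : ℝ) / n) atTop (nhds (H / (H' + c))) := by
  have hden : (H' + c) ≠ 0 := by positivity
  -- lower and upper comparison sequences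
  set L : ℕ → ℝ := fun n => (a n / n) / (b (k n + 1) / (k n + 1) + c) - 1 / n with hLdef
  set U : ℕ → ℝ := fun n => (a n / n) / (b (k n) / (k n) + c) with hUdef
  have hk1 : Tendsto (fun n => k n + 1) atTop atTop :=
    tendsto_atTop_mono (fun n => Nat.le_succ _) hkinf
  have hbk : Tendsto (fun n : ℕ => b (k n) / (k n)) atTop (nhds H') := hH'.comp hkinf
  have hbk1 : Tendsto (fun n : ℕ => b (k n + 1) / (k n + 1)) atTop (nhds H') := by
    simpa only [Function.comp_def, Nat.cast_add, Nat.cast_one] using hH'.comp hk1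
  have hLlim : Tendsto L atTop (nhds (H / (H' + c))) := by
    have h1 : Tendsto (fun n : ℕ => (a n / n) / (b (k n + 1) / (k n + 1) + c)) atTop
        (nhds (H / (H' + c))) := hH.div (hbk1.add tendsto_const_nhds) hden
    have h2 : Tendsto (fun n : ℕ => 1 / (n : ℝ)) atTop (nhds 0) := by
      simpa using tendsto_one_div_atTop_nhds_zero_nat (𝕜 := ℝ)
    simpa only [sub_zero] using h1.sub h2
  have hUlim : Tendsto U atTop (nhds (H / (H' + c))) :=
    hH.div (hbk.add tendsto_const_nhds) hden
  refine tendsto_of_tendsto_of_tendsto_of_le_of_le' hLlim hUlim ?_ ?_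
  · -- L n ≤ k n / n eventually
    filter_upwards [eventually_ge_atTop 1] with n hn
    have hnpos : (0 : ℝ) < n := by exact_mod_cast hn
    have hD : (0 : ℝ) < b (k n + 1) / (k n + 1) + c :=
      add_pos_of_nonneg_of_pos (div_nonneg (hbnn _) (by positivity)) hc
    have key : a n ≤ ((k n : ℝ) + 1) * (b (k n + 1) / (k n + 1) + c) := by
      have hkne : ((k n : ℝ) + 1) ≠ 0 := by positivity
      have : ((k n : ℝ) + 1) * (b (k n + 1) / (k n + 1)) = b (k n + 1) := by
        rw [mul_div_assoc']
        rw [mul_comm]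
        rw [mul_div_assoc]
        rw [div_self (by push_cast; positivity)]
        ring
      calc a n ≤ b (k n + 1) + ((k n : ℝ) + 1) * c := hupper n
        _ = ((k n : ℝ) + 1) * (b (k n + 1) / (k n + 1) + c) := by
            rw [mul_add, this]
    have : (a n / n) / (b (k n + 1) / (k n + 1) + c) ≤ (k n : ℝ) / n + 1 / n := by
      rw [div_le_iff₀ hD]
      have : (k n : ℝ) / n + 1 / n = ((k n : ℝ) + 1) / n := by ring
      rw [this, div_mul_eq_mul_div, div_le_div_iff₀ hnpos hnpos]
      calc a n * n ≤ (((k n : ℝ) + 1) * (b (k n + 1) / (k n + 1) + c)) * n := by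
            exact mul_le_mul_of_nonneg_right key hnpos.le
        _ = ((k n : ℝ) + 1) * (b (k n + 1) / (k n + 1) + c) * n := by ring
    simp only [hLdef]
    linarith
  · -- k n / n ≤ U n eventually
    filter_upwards [eventually_ge_atTop 1] with n hn
    have hnpos : (0 : ℝ) < n := by exact_mod_cast hn
    have hD : (0 : ℝ) < b (k n) / (k n) + c :=
      add_pos_of_nonneg_of_pos (div_nonneg (hbnn _) (Nat.cast_nonneg _)) hc
    have key : (k n : ℝ) * (b (k n) / (k n) + c) ≤ a n := by
      rcases Nat.eq_zero_or_pos (k n) with h0 | hpos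
      · rw [h0]
        simpa using hann n
      · have hkne : ((k n : ℝ)) ≠ 0 := Nat.cast_ne_zero.mpr hpos.ne'
        have : (k n : ℝ) * (b (k n) / (k n)) = b (k n) := by
          field_simp
        calc (k n : ℝ) * (b (k n) / (k n) + c) = b (k n) + (k n : ℝ) * c := by
              rw [mul_add, this]
          _ ≤ a n := hlower n
    rw [hUdef]
    rw [le_div_iff₀ hD]
    rw [div_mul_eq_mul_div, div_le_div_iff₀ hnpos hnpos]
    calc (k n : ℝ) * (b (k n) / (k n) + c) * n ≤ a n * n :=
          mul_le_mul_of_nonneg_right key hnpos.le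
      _ = a n * n := rfl
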